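/- Let n ≥ 3 be an integer and K > 0. There exists a constant c > 0, depending only on n and K, such that for all real numbers λ₁ ≥ λ₂ ≥ … ≥ λₙ with |λ_j| ≤ K for all j, λₙ < 0, and Σ_{j=1}^n arctan λ_j ≥ (n−2)π/2, one has σ_{n−1}(λ₁,…,λₙ) ≥ c. -/

import Mathlib

open Real

noncomputable section

/-- The k-th elementary symmetric polynomial σ_k(λ₁,…,λₙ), with σ₀ = 1. -/
noncomputable def esymm (n k : ℕ) (lam : Fin n → ℝ) : ℝ :=
  ∑ s ∈ Finset.powersetCard k (Finset.univ : Finset (Fin n)), ∏ i ∈ s, lam i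

lemma tan_add_gt {a b : ℝ} (ha : 0 < a) (hb : 0 < b) (hab : a + b < π/2) :
    Real.tan a + Real.tan b < Real.tan (a + b) := by
  have hπ := Real.pi_pos
  have hca : 0 < Real.cos a := Real.cos_pos_of_mem_Ioo ⟨by linarith, by linarith⟩
  have hcb : 0 < Real.cos b := Real.cos_pos_of_mem_Ioo ⟨by linarith, by linarith⟩
  have hcab : 0 < Real.cos (a+b) := Real.cos_pos_of_mem_Ioo ⟨by linarith, by linarith⟩
  have hsa : 0 < Real.sin a := Real.sin_pos_of_pos_of_lt_pi ha (by linarith)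
  have hsb : 0 < Real.sin b := Real.sin_pos_of_pos_of_lt_pi hb (by linarith)
  have hsab : 0 < Real.sin (a+b) := Real.sin_pos_of_pos_of_lt_pi (by linarith) (by linarith)
  rw [Real.tan_eq_sin_div_cos, Real.tan_eq_sin_div_cos, Real.tan_eq_sin_div_cos,
    div_add_div _ _ (ne_of_gt hca) (ne_of_gt hcb), div_lt_div_iff₀ (by positivity) hcab,
    Real.sin_add, Real.cos_add]
  nlinarith [mul_pos hsa hsb, mul_pos (mul_pos hsa hsb) hsab,
    mul_pos (mul_pos hsa hcb) (mul_pos hsa hsb), mul_pos (mul_pos hca hsb) (mul_pos hsa hsb)]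

lemma tan_sum_le {ι : Type*} [DecidableEq ι] (s : Finset ι) (θ : ι → ℝ) :
    (∀ j ∈ s, 0 < θ j) → (∑ j ∈ s, θ j < π/2) →
    ∑ j ∈ s, Real.tan (θ j) ≤ Real.tan (∑ j ∈ s, θ j) := by
  induction s using Finset.induction_on with
  | empty => intro _ _; simp
  | @insert a s ha ih =>
    intro hpos hsum
    have hθa : 0 < θ a := hpos a (Finset.mem_insert_self _ _)
    rw [Finset.sum_insert ha] at hsum ⊢
    rw [Finset.sum_insert ha]
    have hspos : ∀ j ∈ s, 0 < θ j := fun j hj => hpos j (Finset.mem_insert_of_mem hj)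
    have hssum : ∑ j ∈ s, θ j < π/2 := by linarith
    have h1 := ih hspos hssum
    rcases s.eq_empty_or_nonempty with he | hne
    · subst he; simp
    · have hs0 : 0 < ∑ j ∈ s, θ j := Finset.sum_pos hspos hne
      have h2 := tan_add_gt hθa hs0 hsum
      linarith

lemma tan_sum_lt {ι : Type*} [DecidableEq ι] (s : Finset ι) (θ : ι → ℝ)
    (hpos : ∀ j ∈ s, 0 < θ j) (hsum : ∑ j ∈ s, θ j < π/2) (hcard : 2 ≤ s.card) :
    ∑ j ∈ s, Real.tan (θ j) < Real.tan (∑ j ∈ s, θ j) := by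
  obtain ⟨a, ha⟩ : s.Nonempty := Finset.card_pos.mp (by omega)
  have hne : (s.erase a).Nonempty :=
    Finset.card_pos.mp (by rw [Finset.card_erase_of_mem ha]; omega)
  have hepos : ∀ j ∈ s.erase a, 0 < θ j := fun j hj => hpos j (Finset.mem_of_mem_erase hj)
  have hs0 : 0 < ∑ j ∈ s.erase a, θ j := Finset.sum_pos hepos hne
  have hθa : 0 < θ a := hpos a ha
  rw [← Finset.add_sum_erase s θ ha] at hsum ⊢
  rw [← Finset.add_sum_erase s (fun j => Real.tan (θ j)) ha]
  have h1 := tan_sum_le (s.erase a) θ hepos (by linarith)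
  have h2 := tan_add_gt hθa hs0 hsum
  linarith

lemma esymm_pred (n : ℕ) (hn : 1 ≤ n) (lam : Fin n → ℝ) :
    esymm n (n-1) lam = ∑ i : Fin n, ∏ j ∈ Finset.univ.erase i, lam j := by
  rw [esymm, eq_comm]
  refine Finset.sum_nbij' (fun i => Finset.univ.erase i)
    (fun s => if h : sᶜ.Nonempty then sᶜ.min' h else ⟨0, by omega⟩) ?_ ?_ ?_ ?_ ?_
  · intro a _
    rw [Finset.mem_powersetCard]
    refine ⟨Finset.subset_univ _, ?_⟩
    rw [Finset.card_erase_of_mem (Finset.mem_univ _)]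
    simp
  · intro a _; exact Finset.mem_univ _
  · intro a _
    have h1 : (Finset.univ.erase a)ᶜ = {a} := by
      rw [Finset.compl_erase]; simp
    rw [h1]
    simp
  · intro s hs
    rw [Finset.mem_powersetCard] at hs
    have hc : sᶜ.card = 1 := by
      have h1 := Finset.card_compl s
      rw [hs.2] at h1
      simp only [Fintype.card_fin] at h1
      omega
    obtain ⟨a, ha⟩ := Finset.card_eq_one.mp hc
    have has : s = Finset.univ.erase a := by
      have : sᶜᶜ = ({a} : Finset (Fin n))ᶜ := by rw [ha]
      rw [compl_compl] at this
      rw [this]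
      ext x
      simp [Finset.mem_erase, eq_comm]
    simp only [ha, Finset.singleton_nonempty, dif_pos, Finset.min'_singleton]
    exact has.symm
  · intro a _; rfl

lemma esymm_pos (n : ℕ) (hn : 3 ≤ n) (lam : Fin n → ℝ)
    (hsum : ((n : ℝ) - 2) * Real.pi / 2 ≤ ∑ j, Real.arctan (lam j)) :
    0 < esymm n (n-1) lam := by
  have hπ := Real.pi_pos
  have hcard : (Finset.univ : Finset (Fin n)).card = n := by simp
  by_cases hall : ∀ j, 0 < lam j
  · rw [esymm_pred n (by omega) lam]
    apply Finset.sum_pos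
    · intro i _
      exact Finset.prod_pos fun j _ => hall j
    · have : Nonempty (Fin n) := ⟨⟨0, by omega⟩⟩
      exact Finset.univ_nonempty
  · push_neg at hall
    obtain ⟨i₀, hi₀⟩ := hall
    -- all other entries are positive
    have hothers : ∀ j, j ≠ i₀ → 0 < lam j := by
      intro j hj
      by_contra hjle
      push_neg at hjle
      have hsub : ∑ k, Real.arctan (lam k) < ((n : ℝ) - 2) * Real.pi / 2 := by
        have hjmem : j ∈ Finset.univ.erase i₀ := Finset.mem_erase.mpr ⟨hj, Finset.mem_univ _⟩
        rw [← Finset.add_sum_erase _ _ (Finset.mem_univ i₀),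
          ← Finset.add_sum_erase _ _ hjmem]
        have h1 : Real.arctan (lam i₀) ≤ 0 := by
          simpa using Real.arctan_strictMono.monotone hi₀
        have h2 : Real.arctan (lam j) ≤ 0 := by
          simpa using Real.arctan_strictMono.monotone hjle
        have h3 : ∑ k ∈ (Finset.univ.erase i₀).erase j, Real.arctan (lam k)
            < ((n : ℝ) - 2) * Real.pi / 2 := by
          have hcard2 : ((Finset.univ.erase i₀).erase j).card = n - 2 := by
            rw [Finset.card_erase_of_mem hjmem,
              Finset.card_erase_of_mem (Finset.mem_univ _), hcard]
            omega
          have hne2 : ((Finset.univ.erase i₀).erase j).Nonempty :=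
            Finset.card_pos.mp (by omega)
          calc ∑ k ∈ (Finset.univ.erase i₀).erase j, Real.arctan (lam k)
              < ∑ _k ∈ (Finset.univ.erase i₀).erase j, Real.pi / 2 :=
                Finset.sum_lt_sum_of_nonempty hne2 fun k _ => Real.arctan_lt_pi_div_two _
            _ = ((n : ℝ) - 2) * Real.pi / 2 := by
                rw [Finset.sum_const, hcard2, nsmul_eq_mul]
                have : ((n - 2 : ℕ) : ℝ) = (n : ℝ) - 2 := by
                  push_cast [Nat.cast_sub (by omega : 2 ≤ n)]; ring
                rw [this]; ring
        linarith
      linarith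
    rcases lt_or_eq_of_le hi₀ with hi₀lt | hi₀eq
    · -- lam i₀ < 0
      set m : ℝ := -lam i₀ with hm_def
      have hm : 0 < m := by simp only [hm_def]; linarith
      set θ : Fin n → ℝ := fun j => Real.pi/2 - Real.arctan (lam j) with hθ
      have hθpos : ∀ j ∈ Finset.univ.erase i₀, 0 < θ j := by
        intro j _
        have := Real.arctan_lt_pi_div_two (lam j)
        simp only [hθ]; linarith
      have harci₀ : Real.arctan (lam i₀) = -Real.arctan m := by
        rw [hm_def, Real.arctan_neg]; ring_nf
      have harcm : 0 < Real.arctan m := by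
        have := Real.arctan_strictMono hm
        simpa using this
      have hSth : ∑ j ∈ Finset.univ.erase i₀, θ j ≤ Real.pi/2 - Real.arctan m := by
        have hsplit : ∑ j, Real.arctan (lam j)
            = Real.arctan (lam i₀) + ∑ j ∈ Finset.univ.erase i₀, Real.arctan (lam j) :=
          (Finset.add_sum_erase _ _ (Finset.mem_univ i₀)).symm
        have hcard1 : (Finset.univ.erase i₀).card = n - 1 := by
          rw [Finset.card_erase_of_mem (Finset.mem_univ _), hcard]
        have : ∑ j ∈ Finset.univ.erase i₀, θ j
            = ((n : ℝ) - 1) * (Real.pi/2) - ∑ j ∈ Finset.univ.erase i₀, Real.arctan (lam j) := by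
          simp only [hθ, Finset.sum_sub_distrib, Finset.sum_const, hcard1, nsmul_eq_mul]
          have : ((n - 1 : ℕ) : ℝ) = (n : ℝ) - 1 := by
            push_cast [Nat.cast_sub (by omega : 1 ≤ n)]; ring
          rw [this]
        rw [this]
        have : ((n : ℝ) - 2) * Real.pi / 2 + Real.arctan m
            ≤ ∑ j ∈ Finset.univ.erase i₀, Real.arctan (lam j) := by
          rw [hsplit, harci₀] at hsum; linarith
        linarith
      have hhalf : ∑ j ∈ Finset.univ.erase i₀, θ j < Real.pi/2 := by linarith
      have hcard1 : 2 ≤ (Finset.univ.erase i₀).card := by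
        rw [Finset.card_erase_of_mem (Finset.mem_univ _), hcard]; omega
      have hkey := tan_sum_lt (Finset.univ.erase i₀) θ hθpos hhalf hcard1
      have hSpos : 0 < ∑ j ∈ Finset.univ.erase i₀, θ j :=
        Finset.sum_pos hθpos (Finset.card_pos.mp (by omega))
      have hmono : Real.tan (∑ j ∈ Finset.univ.erase i₀, θ j)
          ≤ Real.tan (Real.pi/2 - Real.arctan m) := by
        have h1 : -(Real.pi/2) < Real.arctan m := Real.neg_pi_div_two_lt_arctan m
        exact Real.strictMonoOn_tan.monotoneOn
          ⟨by linarith, by linarith⟩ ⟨by linarith, by linarith⟩ hSth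
      have htanθ : ∀ j ∈ Finset.univ.erase i₀, Real.tan (θ j) = (lam j)⁻¹ := by
        intro j _
        simp only [hθ]
        rw [Real.tan_pi_div_two_sub, Real.tan_arctan]
      have htanm : Real.tan (Real.pi/2 - Real.arctan m) = m⁻¹ := by
        rw [Real.tan_pi_div_two_sub, Real.tan_arctan]
      have hinv : ∑ j ∈ Finset.univ.erase i₀, (lam j)⁻¹ < m⁻¹ := by
        calc ∑ j ∈ Finset.univ.erase i₀, (lam j)⁻¹
            = ∑ j ∈ Finset.univ.erase i₀, Real.tan (θ j) :=
              (Finset.sum_congr rfl htanθ).symm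
          _ < Real.tan (∑ j ∈ Finset.univ.erase i₀, θ j) := hkey
          _ ≤ m⁻¹ := htanm ▸ hmono
      -- now compute esymm
      set P : ℝ := ∏ j ∈ Finset.univ.erase i₀, lam j with hP_def
      have hP : 0 < P :=
        Finset.prod_pos fun j hj => hothers j (Finset.mem_erase.mp hj).1
      have hterm : ∀ i ∈ Finset.univ.erase i₀,
          ∏ j ∈ Finset.univ.erase i, lam j = lam i₀ * (P * (lam i)⁻¹) := by
        intro i hi
        have hii₀ : i ≠ i₀ := (Finset.mem_erase.mp hi).1
        have hlami : lam i ≠ 0 := (hothers i hii₀).ne'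
        have hi₀mem : i₀ ∈ Finset.univ.erase i :=
          Finset.mem_erase.mpr ⟨fun h => hii₀ h.symm, Finset.mem_univ _⟩
        have h1 : lam i₀ * ∏ j ∈ (Finset.univ.erase i).erase i₀, lam j
            = ∏ j ∈ Finset.univ.erase i, lam j :=
          Finset.mul_prod_erase _ _ hi₀mem
        have h2 : lam i * ∏ j ∈ (Finset.univ.erase i₀).erase i, lam j = P :=
          Finset.mul_prod_erase _ _ hi
        have hcomm : (Finset.univ.erase i).erase i₀ = (Finset.univ.erase i₀).erase i := by
          ext x; simp only [Finset.mem_erase, Finset.mem_univ, and_true]; tauto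
        rw [← h1, hcomm]
        have h3 : ∏ j ∈ (Finset.univ.erase i₀).erase i, lam j = P * (lam i)⁻¹ := by
          field_simp
          linarith [h2]
        rw [h3]
      rw [esymm_pred n (by omega) lam, ← Finset.add_sum_erase _ _ (Finset.mem_univ i₀),
        Finset.sum_congr rfl hterm, ← Finset.mul_sum, ← Finset.mul_sum]
      have hmS : m * ∑ j ∈ Finset.univ.erase i₀, (lam j)⁻¹ < 1 := by
        calc m * ∑ j ∈ Finset.univ.erase i₀, (lam j)⁻¹ < m * m⁻¹ :=
              mul_lt_mul_of_pos_left hinv hm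
          _ = 1 := mul_inv_cancel₀ hm.ne'
      have hlami₀ : lam i₀ = -m := by simp [hm_def]
      rw [hlami₀]
      nlinarith [mul_pos hP (sub_pos.mpr hmS)]
    · -- lam i₀ = 0
      rw [esymm_pred n (by omega) lam]
      have hzero : ∀ i ∈ Finset.univ, i ≠ i₀ → ∏ j ∈ Finset.univ.erase i, lam j = 0 := by
        intro i _ hii₀
        apply Finset.prod_eq_zero (i := i₀)
        · exact Finset.mem_erase.mpr ⟨fun h => hii₀ h.symm, Finset.mem_univ _⟩
        · exact hi₀eq
      rw [Finset.sum_eq_single_of_mem i₀ (Finset.mem_univ _) hzero]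
      exact Finset.prod_pos fun j hj => hothers j (Finset.mem_erase.mp hj).1

/-- uniform positive lower bound on σ_{n−1} for ordered λ with |λⱼ| ≤ K,
λₙ < 0, and ∑ arctan λⱼ ≥ (n−2)π/2. Here `lam i` is λ_{i+1} (0-indexed). -/
theorem sigma_n_minus_one_lower_bound
    (n : ℕ) (hn : 3 ≤ n) (K : ℝ) (hK : 0 < K) :
    ∃ c : ℝ, 0 < c ∧
      ∀ lam : Fin n → ℝ,
        (∀ i j : Fin n, i ≤ j → lam j ≤ lam i) →
        (∀ j, |lam j| ≤ K) →
        lam ⟨n - 1, by omega⟩ < 0 →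
        ((n : ℝ) - 2) * Real.pi / 2 ≤ ∑ j, Real.arctan (lam j) →
        c ≤ esymm n (n - 1) lam := by
  classical
  set f : (Fin n → ℝ) → ℝ := fun lam => esymm n (n-1) lam with hf
  have hcont : Continuous f := by
    simp only [hf, esymm]
    exact continuous_finset_sum _ fun s _ =>
      continuous_finset_prod _ fun i _ => continuous_apply i
  set S : Set (Fin n → ℝ) :=
    {lam | (∀ j, |lam j| ≤ K) ∧ ((n : ℝ) - 2) * Real.pi / 2 ≤ ∑ j, Real.arctan (lam j)}
    with hS
  have hSclosed : IsClosed S := by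
    have h1 : IsClosed {lam : Fin n → ℝ | ∀ j, |lam j| ≤ K} := by
      have he : {lam : Fin n → ℝ | ∀ j, |lam j| ≤ K}
          = ⋂ j, {lam : Fin n → ℝ | |lam j| ≤ K} := by
        ext x; simp
      rw [he]
      exact isClosed_iInter fun j =>
        isClosed_le ((continuous_apply j).abs) continuous_const
    have h2 : IsClosed {lam : Fin n → ℝ |
        ((n : ℝ) - 2) * Real.pi / 2 ≤ ∑ j, Real.arctan (lam j)} :=
      isClosed_le continuous_const
        (continuous_finset_sum _ fun j _ =>
          Real.continuous_arctan.comp (continuous_apply j))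
    exact h1.inter h2
  have hScomp : IsCompact S := by
    apply IsCompact.of_isClosed_subset
      (isCompact_univ_pi fun _ : Fin n => isCompact_Icc (a := -K) (b := K)) hSclosed
    intro lam hlam
    intro j _
    rw [Set.mem_Icc, ← abs_le]
    exact hlam.1 j
  by_cases hne : S.Nonempty
  · obtain ⟨x₀, hx₀S, hmin⟩ := hScomp.exists_isMinOn hne hcont.continuousOn
    refine ⟨f x₀, esymm_pos n hn x₀ hx₀S.2, ?_⟩
    intro lam _ habs _ hsum
    exact isMinOn_iff.mp hmin lam ⟨habs, hsum⟩
  · refine ⟨1, one_pos, ?_⟩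
    intro lam _ habs _ hsum
    exact absurd ⟨lam, habs, hsum⟩ hne
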